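/- There exists α₀ > 0 such that for every α ∈ (0, α₀] and every n the following holds: if D is a directed graph on 2n vertices with δ⁰(D) ≥ n and D is α-extremal, then there exists a partition {X₁′, X₂′, Y₁′, Y₂′, Z} of V(D) such that (i) |Z| ≤ 3α^{2/3}n and ||X₁′| − |X₂′||, ||Y₁′| − |Y₂′|| ≤ 3α^{2/3}n, and (ii) for each i ∈ {1,2}: every vertex of X′_{3−i} has at least |X′_i| − 2α^{1/3}n out-neighbors in X′_i and at least |X′_i| − 2α^{1/3}n in-neighbors in X′_i; every vertex of Y′_{3−i} has at least |X′_i| − 2α^{1/3}n in-neighbors in X′_i; every vertex of Y′_i has at least |X′_i| − 2α^{1/3}n out-neighbors in X′_i; every vertex of Y′_i has at least |Y′_i| − 2α^{1/3}n out-neighbors in Y′_i and at least |Y′_i| − 2α^{1/3}n in-neighbors in Y′_i; every vertex of X′_i has at least |Y′_i| − 2α^{1/3}n in-neighbors in Y′_i; and every vertex of X′_{3−i} has at least |Y′_i| − 2α^{1/3}n out-neighbors in Y′_i. -/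

import Mathlib

noncomputable def outDeg {V : Type*} (E : V → V → Prop) (v : V) : ℕ := {w | E v w}.ncard
noncomputable def inDeg {V : Type*} (E : V → V → Prop) (v : V) : ℕ := {w | E w v}.ncard

/-- A digraph on `N` vertices is `α`-extremal. -/
def AlphaExtremal (α : ℝ) {V : Type*} (E : V → V → Prop) : Prop :=
  ∃ A B : Set V,
    (1 - α) * (Nat.card V : ℝ) / 2 ≤ (A.ncard : ℝ) ∧
    (A.ncard : ℝ) ≤ (1 + α) * (Nat.card V : ℝ) / 2 ∧
    (1 - α) * (Nat.card V : ℝ) / 2 ≤ (B.ncard : ℝ) ∧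
    (B.ncard : ℝ) ≤ (1 + α) * (Nat.card V : ℝ) / 2 ∧
    (∀ a ∈ A, ({b ∈ B | E a b}.ncard : ℝ) ≤ α * (Nat.card V : ℝ) / 2) ∧
    (∀ b ∈ B, ({a ∈ A | E a b}.ncard : ℝ) ≤ α * (Nat.card V : ℝ) / 2)

open Set

/-- double counting swap -/
lemma tm_double_count {V : Type} [Fintype V] (R : V → V → Prop) :
    ∑ v : V, {b | R v b}.ncard = ∑ b : V, {v | R v b}.ncard := by
  classical
  have h : ∀ (S : V → V → Prop) (v : V),
      {b | S v b}.ncard = (Finset.univ.filter (fun b => S v b)).card := by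
    intro S v
    rw [Set.ncard_eq_toFinset_card']
    simp [Set.toFinset_setOf]
  have h1 : ∑ v : V, {b | R v b}.ncard
      = ∑ v : V, ∑ b : V, if R v b then 1 else 0 := by
    simp_rw [h, Finset.card_filter]
  have h2 : ∑ b : V, {v | R v b}.ncard
      = ∑ b : V, ∑ v : V, if R v b then 1 else 0 := by
    simp_rw [h fun b v => R v b, Finset.card_filter]
  rw [h1, h2, Finset.sum_comm]

/-- counting helper -/
lemma tm_count_helper {V : Type} [Finite V] (T Bad : Set V) (P : V → Prop)
    (h : ∀ w ∈ T, ¬ P w → w ∈ Bad) (c : ℝ) (hc : (Bad.ncard : ℝ) ≤ c) :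
    (T.ncard : ℝ) - ({w ∈ T | P w}.ncard : ℝ) ≤ c := by
  have hsub : T ⊆ {w ∈ T | P w} ∪ Bad := by
    intro w hw
    by_cases hp : P w
    · exact Or.inl ⟨hw, hp⟩
    · exact Or.inr (h w hw hp)
  have h1 : T.ncard ≤ ({w ∈ T | P w} ∪ Bad).ncard :=
    Set.ncard_le_ncard hsub (Set.toFinite _)
  have h2 := Set.ncard_union_le {w ∈ T | P w} Bad
  have h3 : (T.ncard : ℝ) ≤ ({w ∈ T | P w}.ncard : ℝ) + Bad.ncard := by
    exact_mod_cast h1.trans h2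
  linarith

lemma tm_F2 {V : Type} [Finite V] (E : V → V → Prop) (A B : Set V) (α : ℝ) (n : ℕ)
    (hN : (Nat.card V : ℝ) = 2 * n)
    (hA1 : (1 - α) * (Nat.card V : ℝ) / 2 ≤ (A.ncard : ℝ))
    (hdeg : ∀ v, n ≤ inDeg E v)
    (hBA : ∀ b ∈ B, ({a ∈ A | E a b}.ncard : ℝ) ≤ α * (Nat.card V : ℝ) / 2) :
    ∀ v ∈ B, ({w | w ∉ A ∧ ¬ E w v}.ncard : ℝ) ≤ 2 * α * n := by
  classical
  intro v hv
  set G := {w | w ∉ A ∧ E w v} with hG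
  have hcompl : Aᶜ = G ∪ {w | w ∉ A ∧ ¬ E w v} := by
    ext w
    by_cases h : E w v <;> simp [hG, h, Set.mem_compl_iff]
  have hdis : Disjoint G {w | w ∉ A ∧ ¬ E w v} := by
    rw [Set.disjoint_left]
    rintro w ⟨_, hE⟩ ⟨_, hnE⟩
    exact hnE hE
  have hunion : (Aᶜ).ncard = G.ncard + {w | w ∉ A ∧ ¬ E w v}.ncard := by
    rw [hcompl]
    exact Set.ncard_union_eq hdis (toFinite _) (toFinite _)
  have hAc : A.ncard + (Aᶜ).ncard = Nat.card V := Set.ncard_add_ncard_compl A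
  have hin : n ≤ inDeg E v := hdeg v
  have hsplit2 : {w | E w v} ⊆ {a ∈ A | E a v} ∪ G := by
    intro w hw
    by_cases hA : w ∈ A
    · exact Or.inl ⟨hA, hw⟩
    · exact Or.inr ⟨hA, hw⟩
  have h2 : inDeg E v ≤ {a ∈ A | E a v}.ncard + G.ncard :=
    le_trans (Set.ncard_le_ncard hsplit2 (toFinite _)) (Set.ncard_union_le _ _)
  have h3 := hBA v hv
  have hc1 : ((Aᶜ).ncard : ℝ) = 2 * n - A.ncard := by
    have : ((A.ncard : ℝ)) + ((Aᶜ).ncard : ℝ) = (Nat.card V : ℝ) := by exact_mod_cast hAc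
    linarith [hN ▸ this]
  have hunion' : ((Aᶜ).ncard : ℝ) = (G.ncard : ℝ) + ({w | w ∉ A ∧ ¬ E w v}.ncard : ℝ) := by
    exact_mod_cast hunion
  have h2' : (n : ℝ) ≤ ({a ∈ A | E a v}.ncard : ℝ) + (G.ncard : ℝ) := by
    have : (n:ℝ) ≤ (inDeg E v : ℝ) := by exact_mod_cast hin
    have h2c : ((inDeg E v : ℕ) : ℝ) ≤ ({a ∈ A | E a v}.ncard : ℝ) + (G.ncard : ℝ) := by
      exact_mod_cast h2
    linarith
  have hA1' : (1 - α) * n ≤ (A.ncard : ℝ) := by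
    have e : (1 - α) * (Nat.card V : ℝ) / 2 = (1 - α) * n := by rw [hN]; ring
    linarith [e ▸ hA1]
  have h3' : ({a ∈ A | E a v}.ncard : ℝ) ≤ α * n := by
    have e : α * (Nat.card V : ℝ) / 2 = α * n := by rw [hN]; ring
    linarith [e ▸ h3]
  linarith

lemma tm_Zbound {V : Type} [Fintype V] (P Q : V → Prop) (R : V → V → Prop) (t c : ℝ)
    (hQ : ∀ b, Q b → ({v | P v ∧ ¬ R v b}.ncard : ℝ) ≤ c) :
    ({v | P v ∧ t < ({b | Q b ∧ ¬ R v b}.ncard : ℝ)}.ncard : ℝ) * t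
      ≤ ({b | Q b}.ncard : ℝ) * c := by
  classical
  set ZO := {v | P v ∧ t < ({b | Q b ∧ ¬ R v b}.ncard : ℝ)} with hZO
  have hswap := tm_double_count (V := V) (fun v b => P v ∧ (Q b ∧ ¬ R v b))
  have hmid : (∑ v : V, (({b | P v ∧ (Q b ∧ ¬ R v b)}.ncard : ℝ)))
      = ∑ b : V, (({v | P v ∧ (Q b ∧ ¬ R v b)}.ncard : ℝ)) := by
    exact_mod_cast hswap
  have hLHS : (ZO.ncard : ℝ) * t ≤ ∑ v : V, (({b | P v ∧ (Q b ∧ ¬ R v b)}.ncard : ℝ)) := by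
    have h1 : ∀ v ∈ ZO.toFinset, t ≤ ({b | P v ∧ (Q b ∧ ¬ R v b)}.ncard : ℝ) := by
      intro v hv
      rw [Set.mem_toFinset] at hv
      obtain ⟨hvP, hlt⟩ := hv
      have he : {b | P v ∧ (Q b ∧ ¬ R v b)} = {b | Q b ∧ ¬ R v b} := by
        ext b; simp [hvP]
      rw [he]
      exact hlt.le
    calc (ZO.ncard : ℝ) * t = ∑ _v ∈ ZO.toFinset, t := by
          rw [Finset.sum_const, nsmul_eq_mul, Set.ncard_eq_toFinset_card']
      _ ≤ ∑ v ∈ ZO.toFinset, (({b | P v ∧ (Q b ∧ ¬ R v b)}.ncard : ℝ)) :=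
          Finset.sum_le_sum h1
      _ ≤ ∑ v : V, (({b | P v ∧ (Q b ∧ ¬ R v b)}.ncard : ℝ)) :=
          Finset.sum_le_sum_of_subset_of_nonneg (Finset.subset_univ _)
            (fun _ _ _ => by positivity)
  have hRHS : (∑ b : V, (({v | P v ∧ (Q b ∧ ¬ R v b)}.ncard : ℝ)))
      ≤ ({b | Q b}.ncard : ℝ) * c := by
    have hzero : ∀ b ∈ Finset.univ, b ∉ {b | Q b}.toFinset →
        ({v | P v ∧ (Q b ∧ ¬ R v b)}.ncard : ℝ) = 0 := by
      intro b _ hb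
      rw [Set.mem_toFinset] at hb
      have he : {v | P v ∧ (Q b ∧ ¬ R v b)} = ∅ := by
        ext v; simp only [Set.mem_setOf_eq, Set.mem_empty_iff_false, iff_false]
        rintro ⟨_, hQb, _⟩
        exact hb hQb
      rw [he]
      simp
    rw [← Finset.sum_subset (Finset.subset_univ {b | Q b}.toFinset) hzero]
    have h1 : ∀ b ∈ {b | Q b}.toFinset,
        ({v | P v ∧ (Q b ∧ ¬ R v b)}.ncard : ℝ) ≤ c := by
      intro b hb
      rw [Set.mem_toFinset] at hb
      have hb' : Q b := hb
      have he : {v | P v ∧ (Q b ∧ ¬ R v b)} = {v | P v ∧ ¬ R v b} := by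
        ext v; simp only [Set.mem_setOf_eq]; tauto
      rw [he]
      exact hQ b hb
    calc ∑ b ∈ {b | Q b}.toFinset, (({v | P v ∧ (Q b ∧ ¬ R v b)}.ncard : ℝ))
        ≤ ∑ _b ∈ {b | Q b}.toFinset, c := Finset.sum_le_sum h1
      _ = ({b | Q b}.ncard : ℝ) * c := by
          rw [Finset.sum_const, nsmul_eq_mul, Set.ncard_eq_toFinset_card']
  linarith [hmid ▸ hLHS, hRHS]


set_option maxHeartbeats 2000000 in
theorem statement16 :
    ∃ α₀ : ℝ, 0 < α₀ ∧ ∀ α : ℝ, 0 < α → α ≤ α₀ →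
    ∀ (n : ℕ) (V : Type) (E : V → V → Prop),
      Nat.card V = 2 * n → (∀ v, ¬ E v v) →
      (∀ v, n ≤ outDeg E v ∧ n ≤ inDeg E v) →
      AlphaExtremal α E →
      -- the partition {X₁', X₂', Y₁', Y₂', Z} (indices in Fin 2; `i+1` plays
      -- the role of `3 - i`)
      ∃ (X Y : Fin 2 → Set V) (Z : Set V),
        ([X 0, X 1, Y 0, Y 1, Z] : List (Set V)).Pairwise Disjoint ∧
        X 0 ∪ X 1 ∪ Y 0 ∪ Y 1 ∪ Z = Set.univ ∧
        (Z.ncard : ℝ) ≤ 3 * α ^ ((2 : ℝ) / 3) * n ∧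
        |((X 0).ncard : ℝ) - ((X 1).ncard : ℝ)| ≤ 3 * α ^ ((2 : ℝ) / 3) * n ∧
        |((Y 0).ncard : ℝ) - ((Y 1).ncard : ℝ)| ≤ 3 * α ^ ((2 : ℝ) / 3) * n ∧
        ∀ i : Fin 2,
          (∀ v ∈ X (i + 1),
            ((X i).ncard : ℝ) - 2 * α ^ ((1 : ℝ) / 3) * n ≤
              ({w ∈ X i | E v w}.ncard : ℝ) ∧
            ((X i).ncard : ℝ) - 2 * α ^ ((1 : ℝ) / 3) * n ≤
              ({w ∈ X i | E w v}.ncard : ℝ)) ∧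
          (∀ v ∈ Y (i + 1),
            ((X i).ncard : ℝ) - 2 * α ^ ((1 : ℝ) / 3) * n ≤
              ({w ∈ X i | E w v}.ncard : ℝ)) ∧
          (∀ v ∈ Y i,
            ((X i).ncard : ℝ) - 2 * α ^ ((1 : ℝ) / 3) * n ≤
              ({w ∈ X i | E v w}.ncard : ℝ)) ∧
          (∀ v ∈ Y i,
            ((Y i).ncard : ℝ) - 2 * α ^ ((1 : ℝ) / 3) * n ≤
              ({w ∈ Y i | E v w}.ncard : ℝ) ∧
            ((Y i).ncard : ℝ) - 2 * α ^ ((1 : ℝ) / 3) * n ≤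
              ({w ∈ Y i | E w v}.ncard : ℝ)) ∧
          (∀ v ∈ X i,
            ((Y i).ncard : ℝ) - 2 * α ^ ((1 : ℝ) / 3) * n ≤
              ({w ∈ Y i | E w v}.ncard : ℝ)) ∧
          (∀ v ∈ X (i + 1),
            ((Y i).ncard : ℝ) - 2 * α ^ ((1 : ℝ) / 3) * n ≤
              ({w ∈ Y i | E v w}.ncard : ℝ)) := by
  refine ⟨1/1000000, by norm_num, ?_⟩
  intro α hα hαle n V E hcard hirr hdeg hext
  classical
  by_cases hn : n = 0
  · -- trivial case
    subst hn
    have hcard0 : Nat.card V = 0 := by simpa using hcard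
    have huniv : (Set.univ : Set V).ncard = 0 := by rw [Set.ncard_univ, hcard0]
    refine ⟨![∅, ∅], ![Set.univ, ∅], ∅, ?_, ?_, ?_, ?_, ?_, ?_⟩
    · simp
    · simp
    · simp
    · simp
    · simp [huniv]
    · intro i
      fin_cases i <;>
        simp_all [huniv, Matrix.cons_val_zero, Matrix.cons_val_one, Matrix.head_cons]
  · -- main case
    have hnpos : (0:ℝ) < n := by exact_mod_cast Nat.pos_of_ne_zero hn
    haveI hfin : Finite V := by
      by_contra hinf
      rw [not_finite_iff_infinite] at hinf
      have h0 : Nat.card V = 0 := @Nat.card_eq_zero_of_infinite V hinf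
      omega
    haveI hfty : Fintype V := Fintype.ofFinite V
    obtain ⟨A, B, hA1, hA2, hB1, hB2, hAB, hBA⟩ := hext
    have hN : (Nat.card V : ℝ) = 2 * n := by exact_mod_cast hcard
    set β : ℝ := α ^ ((1:ℝ)/3) with hβ
    have hβpos : 0 < β := Real.rpow_pos_of_pos hα _
    have hab : α = β ^ 3 := by
      rw [hβ, ← Real.rpow_natCast (α ^ ((1:ℝ)/3)) 3, ← Real.rpow_mul hα.le]
      norm_num
    have h23 : α ^ ((2:ℝ)/3) = β ^ 2 := by
      rw [hβ, ← Real.rpow_natCast (α ^ ((1:ℝ)/3)) 2, ← Real.rpow_mul hα.le]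
      norm_num
    have hβle : β ≤ 1/100 := by
      have h1 : ((1:ℝ)/1000000) ^ ((1:ℝ)/3) = 1/100 := by
        rw [show (1/1000000:ℝ) = (1/100)^(3:ℕ) by norm_num, ← Real.rpow_natCast,
          ← Real.rpow_mul (by norm_num)]
        norm_num
      rw [hβ, ← h1]
      exact Real.rpow_le_rpow hα.le hαle (by norm_num)
    rw [h23]
    have hαβ : α ≤ β := by nlinarith [hβpos.le]
    -- cardinality bounds
    have hAlo : (1-α) * n ≤ (A.ncard:ℝ) := by rw [hN] at hA1; linarith
    have hAhi : (A.ncard:ℝ) ≤ (1+α) * n := by rw [hN] at hA2; linarith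
    have hBlo : (1-α) * n ≤ (B.ncard:ℝ) := by rw [hN] at hB1; linarith
    have hBhi : (B.ncard:ℝ) ≤ (1+α) * n := by rw [hN] at hB2; linarith
    -- F-lemmas
    have F2 : ∀ v ∈ B, ({w | w ∉ A ∧ ¬ E w v}.ncard : ℝ) ≤ 2 * α * n :=
      tm_F2 E A B α n hN hA1 (fun v => (hdeg v).2) hBA
    have F1 : ∀ v ∈ A, ({w | w ∉ B ∧ ¬ E v w}.ncard : ℝ) ≤ 2 * α * n :=
      tm_F2 (fun a b => E b a) B A α n hN hB1 (fun v => (hdeg v).1) hAB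
    -- atypical vertices
    have hZOut := tm_Zbound (fun v => v ∉ A) (fun b => b ∈ B) E ((3/2)*β*n) (2*α*n)
      (fun b hb => F2 b hb)
    have hZIn := tm_Zbound (fun v => v ∉ B) (fun a => a ∈ A) (fun v a => E a v)
      ((3/2)*β*n) (2*α*n) (fun a ha => F1 a ha)
    rw [Set.setOf_mem_eq] at hZOut hZIn
    set ZO := {v | v ∉ A ∧ (3/2)*β*(n:ℝ) < ({b | b ∈ B ∧ ¬ E v b}.ncard : ℝ)} with hZOdef
    set ZI := {v | v ∉ B ∧ (3/2)*β*(n:ℝ) < ({a | a ∈ A ∧ ¬ E a v}.ncard : ℝ)} with hZIdef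
    set Z := ZO ∪ ZI with hZdef
    have ht0 : (0:ℝ) < (3/2)*β*n := by positivity
    have hZsum : (Z.ncard:ℝ) ≤ (ZO.ncard:ℝ) + (ZI.ncard:ℝ) := by
      exact_mod_cast Set.ncard_union_le ZO ZI
    have hZmul : (Z.ncard:ℝ) * ((3/2)*β*n) ≤ 4*(1+α)*α*n^2 := by
      have h2 : (0:ℝ) ≤ 2*α*n := by positivity
      calc (Z.ncard:ℝ) * ((3/2)*β*n)
          ≤ ((ZO.ncard:ℝ) + (ZI.ncard:ℝ)) * ((3/2)*β*n) :=
            mul_le_mul_of_nonneg_right hZsum ht0.le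
        _ = (ZO.ncard:ℝ) * ((3/2)*β*n) + (ZI.ncard:ℝ) * ((3/2)*β*n) := by ring
        _ ≤ (B.ncard:ℝ) * (2*α*n) + (A.ncard:ℝ) * (2*α*n) := add_le_add hZOut hZIn
        _ ≤ ((1+α)*n) * (2*α*n) + ((1+α)*n) * (2*α*n) :=
            add_le_add (mul_le_mul_of_nonneg_right hBhi h2)
              (mul_le_mul_of_nonneg_right hAhi h2)
        _ = 4*(1+α)*α*n^2 := by ring
    have hZle : (Z.ncard:ℝ) ≤ (8/3)*(1+α)*β^2*n := by
      have heq : ((8/3)*(1+α)*β^2*(n:ℝ)) * ((3/2)*β*n) = 4*(1+α)*α*n^2 := by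
        rw [hab]; ring
      exact (mul_le_mul_iff_of_pos_right ht0).mp (by rw [heq]; exact hZmul)
    have hb2n : (0:ℝ) ≤ β^2*n := by positivity
    have hcoef : (8/3)*(1+α) + 2*β ≤ 3 := by linarith
    have hZ3 : (Z.ncard:ℝ) ≤ 3*β^2*n := by
      have h1 : ((8/3)*(1+α)) * (β^2*(n:ℝ)) ≤ 3 * (β^2*n) :=
        mul_le_mul_of_nonneg_right (by linarith [hβpos.le]) hb2n
      calc (Z.ncard:ℝ) ≤ (8/3)*(1+α)*β^2*n := hZle
        _ = ((8/3)*(1+α)) * (β^2*n) := by ring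
        _ ≤ 3 * (β^2*n) := h1
        _ = 3*β^2*n := by ring
    have hkey : 2*α*(n:ℝ) + (8/3)*(1+α)*β^2*n ≤ 3*β^2*n := by
      have h1 : (2*β + (8/3)*(1+α)) * (β^2*(n:ℝ)) ≤ 3 * (β^2*n) :=
        mul_le_mul_of_nonneg_right (by linarith) hb2n
      calc 2*α*(n:ℝ) + (8/3)*(1+α)*β^2*n = (2*β + (8/3)*(1+α)) * (β^2*n) := by
            rw [hab]; ring
        _ ≤ 3 * (β^2*n) := h1
        _ = 3*β^2*n := by ring
    -- the sets
    set S : Set V := A ∩ B with hSdef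
    set W : Set V := (A ∪ B)ᶜ with hWdef
    set A1 : Set V := A \ B with hA1def
    set B1 : Set V := B \ A with hB1def
    -- cardinality identities
    have hSA : (S.ncard:ℝ) + (A1.ncard:ℝ) = A.ncard := by
      exact_mod_cast Set.ncard_inter_add_ncard_diff_eq_ncard A B
    have hSB : (S.ncard:ℝ) + (B1.ncard:ℝ) = B.ncard := by
      have h := Set.ncard_inter_add_ncard_diff_eq_ncard B A
      rw [Set.inter_comm] at h
      exact_mod_cast h
    have hWc : ((A ∪ B).ncard:ℝ) + (W.ncard:ℝ) = 2*n := by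
      have h := Set.ncard_add_ncard_compl (A ∪ B)
      have h' : (((A ∪ B).ncard : ℕ) : ℝ) + ((W.ncard : ℕ) : ℝ) = (Nat.card V : ℝ) := by
        exact_mod_cast h
      rw [hN] at h'
      exact h'
    have hUc : ((A ∪ B).ncard:ℝ) + (S.ncard:ℝ) = (A.ncard:ℝ) + (B.ncard:ℝ) := by
      exact_mod_cast Set.ncard_union_add_ncard_inter A B
    -- diff card estimates
    have hdiffle : ∀ T : Set V, ((T \ Z).ncard:ℝ) ≤ T.ncard := by
      intro T
      exact_mod_cast Set.ncard_le_ncard Set.diff_subset (toFinite _)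
    have hdiffge : ∀ T : Set V, (T.ncard:ℝ) ≤ ((T \ Z).ncard:ℝ) + (Z.ncard:ℝ) := by
      intro T
      have hsub : T ⊆ (T \ Z) ∪ Z := by
        intro x hx
        by_cases h : x ∈ Z
        · exact Or.inr h
        · exact Or.inl ⟨hx, h⟩
      exact_mod_cast (Set.ncard_le_ncard hsub (toFinite _)).trans (Set.ncard_union_le _ _)
    have h83 : (0:ℝ) ≤ (8/3)*(1+α)*β^2*n := by positivity
    have hXbal : |(S.ncard:ℝ) - (((W \ Z)).ncard:ℝ)| ≤ 3*β^2*n := by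
      rw [abs_le]
      constructor
      · have := hdiffle W
        linarith
      · have := hdiffge W
        linarith
    have hYbal : |(((B1 \ Z)).ncard:ℝ) - (((A1 \ Z)).ncard:ℝ)| ≤ 3*β^2*n := by
      rw [abs_le]
      constructor
      · have h1 := hdiffge B1
        have h2 := hdiffle A1
        linarith
      · have h1 := hdiffle B1
        have h2 := hdiffge A1
        linarith
    -- per-vertex machinery
    have master : ∀ (T : Set V) (P : V → Prop) (Bad : Set V),
        ((Bad.ncard:ℝ) ≤ 2*β*n) → (∀ w ∈ T, ¬ P w → w ∈ Bad) →
        (T.ncard:ℝ) - 2*β*(n:ℝ) ≤ ({w ∈ T | P w}.ncard : ℝ) := by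
      intro T P Bad hc h
      linarith [tm_count_helper T Bad P h _ hc]
    have hβn : (0:ℝ) ≤ β*n := by positivity
    have h2a2b : 2*α*(n:ℝ) ≤ 2*β*n := by nlinarith
    have hgoodO : ∀ v, v ∉ A → v ∉ Z → ({b | b ∈ B ∧ ¬ E v b}.ncard : ℝ) ≤ 2*β*n := by
      intro v hvA hvZ
      have h1 : ¬ ((3/2)*β*(n:ℝ) < ({b | b ∈ B ∧ ¬ E v b}.ncard : ℝ)) :=
        fun h => hvZ (Or.inl ⟨hvA, h⟩)
      push_neg at h1
      linarith
    have hgoodI : ∀ v, v ∉ B → v ∉ Z → ({a | a ∈ A ∧ ¬ E a v}.ncard : ℝ) ≤ 2*β*n := by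
      intro v hvB hvZ
      have h1 : ¬ ((3/2)*β*(n:ℝ) < ({a | a ∈ A ∧ ¬ E a v}.ncard : ℝ)) :=
        fun h => hvZ (Or.inr ⟨hvB, h⟩)
      push_neg at h1
      linarith
    have hFA : ∀ v ∈ A, ({w | w ∉ B ∧ ¬ E v w}.ncard : ℝ) ≤ 2*β*n :=
      fun v hv => le_trans (F1 v hv) h2a2b
    have hFB : ∀ v ∈ B, ({w | w ∉ A ∧ ¬ E w v}.ncard : ℝ) ≤ 2*β*n :=
      fun v hv => le_trans (F2 v hv) h2a2b
    -- the sixteen conditions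
    have hWS_out : ∀ v ∈ W \ Z, (S.ncard:ℝ) - 2*β*(n:ℝ) ≤ ({w ∈ S | E v w}.ncard : ℝ) := by
      rintro v ⟨hvW, hvZ⟩
      exact master S _ _ (hgoodO v (fun h => hvW (Or.inl h)) hvZ)
        (fun w hw hnw => ⟨hw.2, hnw⟩)
    have hWS_in : ∀ v ∈ W \ Z, (S.ncard:ℝ) - 2*β*(n:ℝ) ≤ ({w ∈ S | E w v}.ncard : ℝ) := by
      rintro v ⟨hvW, hvZ⟩
      exact master S _ _ (hgoodI v (fun h => hvW (Or.inr h)) hvZ)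
        (fun w hw hnw => ⟨hw.1, hnw⟩)
    have hA1S_in : ∀ v ∈ A1 \ Z, (S.ncard:ℝ) - 2*β*(n:ℝ) ≤ ({w ∈ S | E w v}.ncard : ℝ) := by
      rintro v ⟨hvA1, hvZ⟩
      exact master S _ _ (hgoodI v hvA1.2 hvZ) (fun w hw hnw => ⟨hw.1, hnw⟩)
    have hB1S_out : ∀ v ∈ B1 \ Z, (S.ncard:ℝ) - 2*β*(n:ℝ) ≤ ({w ∈ S | E v w}.ncard : ℝ) := by
      rintro v ⟨hvB1, hvZ⟩
      exact master S _ _ (hgoodO v hvB1.2 hvZ) (fun w hw hnw => ⟨hw.2, hnw⟩)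
    have hB1B1_out : ∀ v ∈ B1 \ Z, ((B1 \ Z).ncard:ℝ) - 2*β*(n:ℝ) ≤
        ({w ∈ B1 \ Z | E v w}.ncard : ℝ) := by
      rintro v ⟨hvB1, hvZ⟩
      exact master (B1 \ Z) _ _ (hgoodO v hvB1.2 hvZ) (fun w hw hnw => ⟨hw.1.1, hnw⟩)
    have hB1B1_in : ∀ v ∈ B1 \ Z, ((B1 \ Z).ncard:ℝ) - 2*β*(n:ℝ) ≤
        ({w ∈ B1 \ Z | E w v}.ncard : ℝ) := by
      rintro v ⟨hvB1, hvZ⟩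
      exact master (B1 \ Z) _ _ (hFB v hvB1.1) (fun w hw hnw => ⟨hw.1.2, hnw⟩)
    have hSB1_in : ∀ v ∈ S, ((B1 \ Z).ncard:ℝ) - 2*β*(n:ℝ) ≤
        ({w ∈ B1 \ Z | E w v}.ncard : ℝ) := by
      intro v hv
      exact master (B1 \ Z) _ _ (hFB v hv.2) (fun w hw hnw => ⟨hw.1.2, hnw⟩)
    have hWB1_out : ∀ v ∈ W \ Z, ((B1 \ Z).ncard:ℝ) - 2*β*(n:ℝ) ≤
        ({w ∈ B1 \ Z | E v w}.ncard : ℝ) := by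
      rintro v ⟨hvW, hvZ⟩
      exact master (B1 \ Z) _ _ (hgoodO v (fun h => hvW (Or.inl h)) hvZ)
        (fun w hw hnw => ⟨hw.1.1, hnw⟩)
    have hSW_out : ∀ v ∈ S, ((W \ Z).ncard:ℝ) - 2*β*(n:ℝ) ≤
        ({w ∈ W \ Z | E v w}.ncard : ℝ) := by
      intro v hv
      exact master (W \ Z) _ _ (hFA v hv.1)
        (fun w hw hnw => ⟨fun h => hw.1 (Or.inr h), hnw⟩)
    have hSW_in : ∀ v ∈ S, ((W \ Z).ncard:ℝ) - 2*β*(n:ℝ) ≤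
        ({w ∈ W \ Z | E w v}.ncard : ℝ) := by
      intro v hv
      exact master (W \ Z) _ _ (hFB v hv.2)
        (fun w hw hnw => ⟨fun h => hw.1 (Or.inl h), hnw⟩)
    have hB1W_in : ∀ v ∈ B1 \ Z, ((W \ Z).ncard:ℝ) - 2*β*(n:ℝ) ≤
        ({w ∈ W \ Z | E w v}.ncard : ℝ) := by
      rintro v ⟨hvB1, hvZ⟩
      exact master (W \ Z) _ _ (hFB v hvB1.1)
        (fun w hw hnw => ⟨fun h => hw.1 (Or.inl h), hnw⟩)
    have hA1W_out : ∀ v ∈ A1 \ Z, ((W \ Z).ncard:ℝ) - 2*β*(n:ℝ) ≤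
        ({w ∈ W \ Z | E v w}.ncard : ℝ) := by
      rintro v ⟨hvA1, hvZ⟩
      exact master (W \ Z) _ _ (hFA v hvA1.1)
        (fun w hw hnw => ⟨fun h => hw.1 (Or.inr h), hnw⟩)
    have hA1A1_out : ∀ v ∈ A1 \ Z, ((A1 \ Z).ncard:ℝ) - 2*β*(n:ℝ) ≤
        ({w ∈ A1 \ Z | E v w}.ncard : ℝ) := by
      rintro v ⟨hvA1, hvZ⟩
      exact master (A1 \ Z) _ _ (hFA v hvA1.1) (fun w hw hnw => ⟨hw.1.2, hnw⟩)
    have hA1A1_in : ∀ v ∈ A1 \ Z, ((A1 \ Z).ncard:ℝ) - 2*β*(n:ℝ) ≤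
        ({w ∈ A1 \ Z | E w v}.ncard : ℝ) := by
      rintro v ⟨hvA1, hvZ⟩
      exact master (A1 \ Z) _ _ (hgoodI v hvA1.2 hvZ) (fun w hw hnw => ⟨hw.1.1, hnw⟩)
    have hWA1_in : ∀ v ∈ W \ Z, ((A1 \ Z).ncard:ℝ) - 2*β*(n:ℝ) ≤
        ({w ∈ A1 \ Z | E w v}.ncard : ℝ) := by
      rintro v ⟨hvW, hvZ⟩
      exact master (A1 \ Z) _ _ (hgoodI v (fun h => hvW (Or.inr h)) hvZ)
        (fun w hw hnw => ⟨hw.1.1, hnw⟩)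
    have hSA1_out : ∀ v ∈ S, ((A1 \ Z).ncard:ℝ) - 2*β*(n:ℝ) ≤
        ({w ∈ A1 \ Z | E v w}.ncard : ℝ) := by
      intro v hv
      exact master (A1 \ Z) _ _ (hFA v hv.1) (fun w hw hnw => ⟨hw.1.2, hnw⟩)
    -- disjointness
    have d1 : Disjoint S (W \ Z) := by
      rw [Set.disjoint_left]
      rintro x hx ⟨hw, _⟩
      exact hw (Or.inl hx.1)
    have d2 : Disjoint S (B1 \ Z) := by
      rw [Set.disjoint_left]
      rintro x hx ⟨hb, _⟩
      exact hb.2 hx.1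
    have d3 : Disjoint S (A1 \ Z) := by
      rw [Set.disjoint_left]
      rintro x hx ⟨ha, _⟩
      exact ha.2 hx.2
    have d4 : Disjoint S Z := by
      rw [Set.disjoint_left]
      rintro x hx (⟨h, _⟩ | ⟨h, _⟩)
      · exact h hx.1
      · exact h hx.2
    have d5 : Disjoint (W \ Z) (B1 \ Z) := by
      rw [Set.disjoint_left]
      rintro x ⟨hw, _⟩ ⟨hb, _⟩
      exact hw (Or.inr hb.1)
    have d6 : Disjoint (W \ Z) (A1 \ Z) := by
      rw [Set.disjoint_left]
      rintro x ⟨hw, _⟩ ⟨ha, _⟩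
      exact hw (Or.inl ha.1)
    have d7 : Disjoint (W \ Z) Z := by
      rw [Set.disjoint_left]
      rintro x ⟨_, hz⟩ h
      exact hz h
    have d8 : Disjoint (B1 \ Z) (A1 \ Z) := by
      rw [Set.disjoint_left]
      rintro x ⟨hb, _⟩ ⟨ha, _⟩
      exact hb.2 ha.1
    have d9 : Disjoint (B1 \ Z) Z := by
      rw [Set.disjoint_left]
      rintro x ⟨_, hz⟩ h
      exact hz h
    have d10 : Disjoint (A1 \ Z) Z := by
      rw [Set.disjoint_left]
      rintro x ⟨_, hz⟩ h
      exact hz h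
    refine ⟨![S, W \ Z], ![B1 \ Z, A1 \ Z], Z, ?_, ?_, ?_, ?_, ?_, ?_⟩
    · simp only [Matrix.cons_val_zero, Matrix.cons_val_one, Matrix.head_cons]
      refine List.Pairwise.cons ?_ (List.Pairwise.cons ?_ (List.Pairwise.cons ?_
        (List.Pairwise.cons ?_ (List.pairwise_singleton _ _))))
      · intro T hT
        simp only [List.mem_cons, List.not_mem_nil, or_false] at hT
        rcases hT with rfl | rfl | rfl | rfl
        exacts [d1, d2, d3, d4]
      · intro T hT
        simp only [List.mem_cons, List.not_mem_nil, or_false] at hT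
        rcases hT with rfl | rfl | rfl
        exacts [d5, d6, d7]
      · intro T hT
        simp only [List.mem_cons, List.not_mem_nil, or_false] at hT
        rcases hT with rfl | rfl
        exacts [d8, d9]
      · intro T hT
        simp only [List.mem_cons, List.not_mem_nil, or_false] at hT
        rcases hT with rfl
        exact d10
    · simp only [Matrix.cons_val_zero, Matrix.cons_val_one, Matrix.head_cons]
      ext x
      simp only [Set.mem_union, Set.mem_univ, iff_true, Set.mem_diff, Set.mem_compl_iff,
        Set.mem_inter_iff, hSdef, hWdef, hA1def, hB1def]
      by_cases hxA : x ∈ A <;> by_cases hxB : x ∈ B <;> by_cases hxZ : x ∈ Z <;> tauto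
    · exact hZ3
    · simp only [Matrix.cons_val_zero, Matrix.cons_val_one, Matrix.head_cons]
      exact hXbal
    · simp only [Matrix.cons_val_zero, Matrix.cons_val_one, Matrix.head_cons]
      exact hYbal
    · intro i
      fin_cases i
      · simp only [Fin.zero_eta, Fin.isValue, show (0:Fin 2) + 1 = 1 from rfl,
          Matrix.cons_val_zero, Matrix.cons_val_one, Matrix.head_cons]
        exact ⟨fun v hv => ⟨hWS_out v hv, hWS_in v hv⟩, hA1S_in, hB1S_out,
          fun v hv => ⟨hB1B1_out v hv, hB1B1_in v hv⟩, hSB1_in, hWB1_out⟩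
      · simp only [Fin.mk_one, Fin.isValue, show (1:Fin 2) + 1 = 0 from rfl,
          Matrix.cons_val_zero, Matrix.cons_val_one, Matrix.head_cons]
        exact ⟨fun v hv => ⟨hSW_out v hv, hSW_in v hv⟩, hB1W_in, hA1W_out,
          fun v hv => ⟨hA1A1_out v hv, hA1A1_in v hv⟩, hWA1_in, hSA1_out⟩
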